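/- arXiv:2303.15952 — 3 statements merged into one kernel-verified Lean document; each statement's English description precedes it below -/
import Mathlib

section
/- For every Borel-measurable function f : ℝ₊ⁿ → [0,∞] and every s > 0, one has ∫_{ℝ₊ⁿ} f(1/x₁,…,1/xₙ) Δ(x)^{−μ₀−1} ω^A(x) dx = ∫_{ℝ₊ⁿ} f(x) Δ(x)^{−μ₀−1} ω^A(x) dx and ∫_{ℝ₊ⁿ} f(s·x₁,…,s·xₙ) Δ(x)^{−μ₀−1} ω^A(x) dx = ∫_{ℝ₊ⁿ} f(x) Δ(x)^{−μ₀−1} ω^A(x) dx; that is, the measure Δ(x)^{−μ₀−1} ω^A(x) dx on ℝ₊ⁿ is invariant under coordinatewise inversion x ↦ (1/x₁,…,1/xₙ) and under all dilations x ↦ sx. -/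
open MeasureTheory Real

/-- The type-A weight `ω^A(x) = ∏_{i<j} |x_i - x_j|^{2k}`. -/
noncomputable def weightA (n : ℕ) (k : ℝ) (x : Fin n → ℝ) : ℝ :=
  ∏ i : Fin n, ∏ j ∈ Finset.Ioi i, |x i - x j| ^ (2 * k)

lemma prod_pairs {M : Type*} [CommMonoid M] {n : ℕ} (x : Fin n → M) :
    ∏ i : Fin n, ∏ j ∈ Finset.Ioi i, (x i * x j) = (∏ i, x i) ^ (n - 1) := by
  have h1 : ∏ i : Fin n, ∏ j ∈ Finset.Ioi i, (x i * x j)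
      = (∏ i : Fin n, ∏ j ∈ Finset.Ioi i, x i) * (∏ i : Fin n, ∏ j ∈ Finset.Ioi i, x j) := by
    rw [← Finset.prod_mul_distrib]
    exact Finset.prod_congr rfl fun i _ => Finset.prod_mul_distrib
  have h2 : (∏ i : Fin n, ∏ j ∈ Finset.Ioi i, x j)
      = ∏ j : Fin n, ∏ i ∈ Finset.Iio j, x j := by
    apply Finset.prod_comm'
    intro i j
    simp [Finset.mem_Ioi, Finset.mem_Iio]
  rw [h1, h2]
  simp only [Finset.prod_const, Fin.card_Ioi, Fin.card_Iio]
  rw [← Finset.prod_mul_distrib, ← Finset.prod_pow]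
  refine Finset.prod_congr rfl fun i _ => ?_
  rw [← pow_add]
  congr 1
  have := i.isLt
  omega

lemma det_pi_smul {n : ℕ} (c : Fin n → ℝ) :
    (ContinuousLinearMap.pi fun i : Fin n =>
      c i • ContinuousLinearMap.proj (R := ℝ) (φ := fun _ : Fin n => ℝ) i).det
    = ∏ i, c i := by
  show LinearMap.det _ = _
  rw [← LinearMap.det_toMatrix']
  have : (LinearMap.toMatrix'
      ((ContinuousLinearMap.pi fun i : Fin n =>
        c i • ContinuousLinearMap.proj (R := ℝ) (φ := fun _ : Fin n => ℝ) i) :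
        (Fin n → ℝ) →ₗ[ℝ] (Fin n → ℝ))) = Matrix.diagonal c := by
    ext i j
    simp [LinearMap.toMatrix'_apply, Matrix.diagonal_apply, Pi.single_apply, eq_comm, mul_comm]
  rw [this, Matrix.det_diagonal]

lemma spow_pairs {n : ℕ} (hn : 1 ≤ n) {s : ℝ} (hs : 0 < s) (k : ℝ) :
    ∏ i : Fin n, ∏ j ∈ Finset.Ioi i, s ^ (2 * k) = s ^ (k * n * ((n : ℝ) - 1)) := by
  have hterm : ∀ i j : Fin n, s ^ (2 * k) = s ^ k * s ^ k := by
    intro i j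
    rw [← rpow_add hs]; ring_nf
  calc ∏ i : Fin n, ∏ j ∈ Finset.Ioi i, s ^ (2 * k)
      = ∏ i : Fin n, ∏ j ∈ Finset.Ioi i, ((fun _ : Fin n => s ^ k) i * (fun _ => s ^ k) j) := by
        exact Finset.prod_congr rfl fun i _ => Finset.prod_congr rfl fun j _ => hterm i j
    _ = (∏ _i : Fin n, s ^ k) ^ (n - 1) := prod_pairs _
    _ = ((s ^ k) ^ (n : ℕ)) ^ (n - 1 : ℕ) := by rw [Finset.prod_const, Finset.card_univ,
          Fintype.card_fin]
    _ = s ^ (k * n * ((n : ℝ) - 1)) := by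
        rw [← rpow_natCast (s ^ k) n, ← rpow_mul hs.le, ← rpow_natCast _ (n - 1),
          ← rpow_mul hs.le, Nat.cast_sub hn]
        norm_num

lemma weightA_smul {n : ℕ} (hn : 1 ≤ n) (k : ℝ) {s : ℝ} (hs : 0 < s) (x : Fin n → ℝ) :
    weightA n k (fun i => s * x i) = s ^ (k * n * ((n : ℝ) - 1)) * weightA n k x := by
  unfold weightA
  rw [← spow_pairs hn hs k, ← Finset.prod_mul_distrib]
  refine Finset.prod_congr rfl fun i _ => ?_
  rw [← Finset.prod_mul_distrib]
  refine Finset.prod_congr rfl fun j _ => ?_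
  rw [← mul_sub, abs_mul, abs_of_pos hs, mul_rpow hs.le (abs_nonneg _)]

lemma weightA_inv {n : ℕ} (hn : 1 ≤ n) (k : ℝ) (x : Fin n → ℝ) (hx : ∀ i, 0 < x i) :
    weightA n k (fun i => (x i)⁻¹)
      = (∏ i, x i) ^ (-(2 * k) * ((n : ℝ) - 1)) * weightA n k x := by
  have hP : 0 < ∏ i, x i := Finset.prod_pos fun i _ => hx i
  have hterm : ∀ i j : Fin n, |(x i)⁻¹ - (x j)⁻¹| ^ (2 * k)
      = (((x i) ^ (2 * k))⁻¹ * ((x j) ^ (2 * k))⁻¹) * |x i - x j| ^ (2 * k) := by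
    intro i j
    have habs : |(x i)⁻¹ - (x j)⁻¹| = (x i)⁻¹ * (x j)⁻¹ * |x i - x j| := by
      rw [← abs_of_pos (mul_pos (inv_pos.2 (hx i)) (inv_pos.2 (hx j))), ← abs_mul]
      rw [abs_sub_comm]
      congr 1
      field_simp [(hx i).ne', (hx j).ne']
    rw [habs, mul_rpow (mul_pos (inv_pos.2 (hx i)) (inv_pos.2 (hx j))).le (abs_nonneg _),
      mul_rpow (inv_pos.2 (hx i)).le (inv_pos.2 (hx j)).le,
      inv_rpow (hx i).le, inv_rpow (hx j).le]
  unfold weightA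
  calc ∏ i : Fin n, ∏ j ∈ Finset.Ioi i, |(fun i => (x i)⁻¹) i - (fun i => (x i)⁻¹) j| ^ (2 * k)
      = (∏ i : Fin n, ∏ j ∈ Finset.Ioi i,
          ((fun i => ((x i) ^ (2 * k))⁻¹) i * (fun i => ((x i) ^ (2 * k))⁻¹) j))
        * ∏ i : Fin n, ∏ j ∈ Finset.Ioi i, |x i - x j| ^ (2 * k) := by
        rw [← Finset.prod_mul_distrib]
        refine Finset.prod_congr rfl fun i _ => ?_
        rw [← Finset.prod_mul_distrib]
        exact Finset.prod_congr rfl fun j _ => hterm i j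
    _ = (∏ i, x i) ^ (-(2 * k) * ((n : ℝ) - 1))
        * ∏ i : Fin n, ∏ j ∈ Finset.Ioi i, |x i - x j| ^ (2 * k) := by
        congr 1
        rw [prod_pairs]
        have h1 : (∏ i, ((x i) ^ (2 * k))⁻¹) = (∏ i, x i) ^ (-(2 * k)) := by
          rw [Finset.prod_inv_distrib, Real.finset_prod_rpow _ _ (fun i _ => (hx i).le),
            ← rpow_neg hP.le]
        rw [h1, ← rpow_natCast _ (n - 1), ← rpow_mul hP.le, Nat.cast_sub hn]
        norm_num

lemma density_inv_eq {n : ℕ} (hn : 1 ≤ n) (k μ₀ : ℝ) (hμ₀ : μ₀ = k * (n - 1))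
    (x : Fin n → ℝ) (hx : ∀ i, 0 < x i) :
    (∏ i, ((x i) ^ 2)⁻¹) * ((∏ i, (x i)⁻¹) ^ (-μ₀ - 1) * weightA n k (fun i => (x i)⁻¹))
      = (∏ i, x i) ^ (-μ₀ - 1) * weightA n k x := by
  have hP : 0 < ∏ i, x i := Finset.prod_pos fun i _ => hx i
  have h1 : (∏ i, ((x i : ℝ) ^ 2)⁻¹) = (∏ i, x i) ^ (-2 : ℝ) := by
    rw [Finset.prod_inv_distrib, Finset.prod_pow, ← rpow_natCast (∏ i, x i) 2,
      ← rpow_neg hP.le]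
    norm_num
  have h2 : (∏ i, (x i)⁻¹) = (∏ i, x i) ^ (-1 : ℝ) := by
    rw [Finset.prod_inv_distrib, rpow_neg_one]
  rw [h1, h2, weightA_inv hn k x hx, ← rpow_mul hP.le, ← mul_assoc, ← mul_assoc,
    ← rpow_add hP, ← rpow_add hP]
  congr 2
  rw [hμ₀]; ring

lemma density_smul_eq {n : ℕ} (hn : 1 ≤ n) (k μ₀ : ℝ) (hμ₀ : μ₀ = k * (n - 1))
    {s : ℝ} (hs : 0 < s) (x : Fin n → ℝ) (hx : ∀ i, 0 < x i) :
    (s ^ (n : ℕ)) * ((∏ i, (s * x i)) ^ (-μ₀ - 1) * weightA n k (fun i => s * x i))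
      = (∏ i, x i) ^ (-μ₀ - 1) * weightA n k x := by
  have hP : 0 < ∏ i, x i := Finset.prod_pos fun i _ => hx i
  have hprod : (∏ i, (s * x i)) = s ^ (n : ℕ) * ∏ i, x i := by
    rw [Finset.prod_mul_distrib, Finset.prod_const, Finset.card_univ, Fintype.card_fin]
  rw [hprod, mul_rpow (pow_nonneg hs.le n) hP.le, weightA_smul hn k hs x]
  have hcollect : (s ^ (n : ℕ)) * ((s ^ (n : ℕ)) ^ (-μ₀ - 1)) * (s ^ (k * n * ((n : ℝ) - 1)))
      = 1 := by
    rw [← rpow_natCast s n, ← rpow_mul hs.le, ← rpow_add hs, ← rpow_add hs]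
    rw [show (n : ℝ) + (n : ℝ) * (-μ₀ - 1) + k * n * ((n : ℝ) - 1) = 0 by rw [hμ₀]; ring,
      rpow_zero]
  calc (s ^ (n : ℕ)) * ((s ^ (n : ℕ)) ^ (-μ₀ - 1) * (∏ i, x i) ^ (-μ₀ - 1)
        * (s ^ (k * n * ((n : ℝ) - 1)) * weightA n k x))
      = ((s ^ (n : ℕ)) * ((s ^ (n : ℕ)) ^ (-μ₀ - 1)) * (s ^ (k * n * ((n : ℝ) - 1))))
        * ((∏ i, x i) ^ (-μ₀ - 1) * weightA n k x) := by ring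
    _ = (∏ i, x i) ^ (-μ₀ - 1) * weightA n k x := by rw [hcollect, one_mul]

/-- the measure `Δ(x)^{-μ₀-1} ω^A(x) dx` on `ℝ₊ⁿ` is invariant under
coordinatewise inversion and under all dilations. -/
theorem inversion_and_dilation_invariance
    (n : ℕ) (hn : 1 ≤ n) (k : ℝ) (hk : 0 ≤ k)
    (μ₀ : ℝ) (hμ₀ : μ₀ = k * (n - 1))
    (f : (Fin n → ℝ) → ENNReal) (hf : Measurable f) (s : ℝ) (hs : 0 < s) :
    (∫⁻ x in Set.univ.pi fun _ : Fin n => Set.Ioi (0 : ℝ),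
        f (fun i => (x i)⁻¹) *
          ENNReal.ofReal ((∏ i, x i) ^ (-μ₀ - 1) * weightA n k x)
      = ∫⁻ x in Set.univ.pi fun _ : Fin n => Set.Ioi (0 : ℝ),
        f x * ENNReal.ofReal ((∏ i, x i) ^ (-μ₀ - 1) * weightA n k x)) ∧
    (∫⁻ x in Set.univ.pi fun _ : Fin n => Set.Ioi (0 : ℝ),
        f (fun i => s * x i) *
          ENNReal.ofReal ((∏ i, x i) ^ (-μ₀ - 1) * weightA n k x)
      = ∫⁻ x in Set.univ.pi fun _ : Fin n => Set.Ioi (0 : ℝ),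
        f x * ENNReal.ofReal ((∏ i, x i) ^ (-μ₀ - 1) * weightA n k x)) := by
  have hΩ : MeasurableSet (Set.univ.pi fun _ : Fin n => Set.Ioi (0 : ℝ)) :=
    MeasurableSet.univ_pi fun _ => measurableSet_Ioi
  have hmem : ∀ x : Fin n → ℝ,
      x ∈ (Set.univ.pi fun _ : Fin n => Set.Ioi (0 : ℝ)) ↔ ∀ i, 0 < x i := by
    intro x; simp [Set.mem_pi]
  constructor
  · -- inversion
    set φ' : (Fin n → ℝ) → (Fin n → ℝ) →L[ℝ] (Fin n → ℝ) :=
      fun x => ContinuousLinearMap.pi fun i =>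
        (-(x i ^ 2)⁻¹) • ContinuousLinearMap.proj i with hφ'
    have hderiv : ∀ x ∈ (Set.univ.pi fun _ : Fin n => Set.Ioi (0 : ℝ)),
        HasFDerivWithinAt (fun x : Fin n → ℝ => fun i => (x i)⁻¹) (φ' x)
          (Set.univ.pi fun _ : Fin n => Set.Ioi (0 : ℝ)) x := by
      intro x hx
      apply HasFDerivAt.hasFDerivWithinAt
      rw [hasFDerivAt_pi']
      intro i
      have h1 : HasFDerivAt (fun x : Fin n → ℝ => (x i)⁻¹)
          ((ContinuousLinearMap.smulRight (1 : ℝ →L[ℝ] ℝ) (-(x i ^ 2)⁻¹)).comp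
            (ContinuousLinearMap.proj i)) x := by
        have hp : HasFDerivAt (fun x : Fin n → ℝ => x i)
            (ContinuousLinearMap.proj (R := ℝ) (φ := fun _ : Fin n => ℝ) i) x :=
          (ContinuousLinearMap.proj (R := ℝ) (φ := fun _ : Fin n => ℝ) i).hasFDerivAt
        exact (hasFDerivAt_inv (((hmem x).1 hx i).ne')).comp x hp
      refine h1.congr_fderiv (ContinuousLinearMap.ext fun y => ?_)
      simp [hφ', mul_comm]
    have hinj : Set.InjOn (fun x : Fin n → ℝ => fun i => (x i)⁻¹)
        (Set.univ.pi fun _ : Fin n => Set.Ioi (0 : ℝ)) :=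
      fun x _ y _ h => funext fun i => inv_injective (congrFun h i)
    have himg : (fun x : Fin n → ℝ => fun i => (x i)⁻¹) ''
        (Set.univ.pi fun _ : Fin n => Set.Ioi (0 : ℝ))
        = (Set.univ.pi fun _ : Fin n => Set.Ioi (0 : ℝ)) := by
      ext y
      constructor
      · rintro ⟨x, hx, rfl⟩
        exact (hmem _).2 fun i => inv_pos.2 ((hmem x).1 hx i)
      · intro hy
        exact ⟨fun i => (y i)⁻¹, (hmem _).2 fun i => inv_pos.2 ((hmem y).1 hy i),
          funext fun i => inv_inv (y i)⟩
    have key := lintegral_image_eq_lintegral_abs_det_fderiv_mul volume hΩ hderiv hinj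
      (fun x => f x * ENNReal.ofReal ((∏ i, x i) ^ (-μ₀ - 1) * weightA n k x))
    rw [himg] at key
    rw [key]
    apply setLIntegral_congr_fun hΩ
    intro x hx
    have hx' : ∀ i, 0 < x i := (hmem x).1 hx
    have hdet : (φ' x).det = ∏ i, (-(x i ^ 2)⁻¹) := det_pi_smul _
    have hdetabs : |(φ' x).det| = ∏ i, ((x i) ^ 2)⁻¹ := by
      rw [hdet, Finset.abs_prod]
      exact Finset.prod_congr rfl fun i _ => by
        rw [abs_neg, abs_of_pos (inv_pos.2 (pow_pos (hx' i) 2))]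
    have hA : (0:ℝ) ≤ ∏ i, ((x i) ^ 2)⁻¹ :=
      Finset.prod_nonneg fun i _ => (inv_pos.2 (pow_pos (hx' i) 2)).le
    simp only [hdetabs]
    rw [mul_left_comm, ← ENNReal.ofReal_mul hA]
    rw [show (∏ i, ((x i) ^ 2)⁻¹) *
        ((∏ i, (x i)⁻¹) ^ (-μ₀ - 1) * weightA n k (fun i => (x i)⁻¹))
        = (∏ i, x i) ^ (-μ₀ - 1) * weightA n k x from
      density_inv_eq hn k μ₀ hμ₀ x hx']
  · -- dilation
    set φ' : (Fin n → ℝ) → (Fin n → ℝ) →L[ℝ] (Fin n → ℝ) :=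
      fun _ => ContinuousLinearMap.pi fun i : Fin n =>
        s • ContinuousLinearMap.proj i with hφ'
    have hderiv : ∀ x ∈ (Set.univ.pi fun _ : Fin n => Set.Ioi (0 : ℝ)),
        HasFDerivWithinAt (fun x : Fin n → ℝ => fun i => s * x i) (φ' x)
          (Set.univ.pi fun _ : Fin n => Set.Ioi (0 : ℝ)) x := by
      intro x _
      apply HasFDerivAt.hasFDerivWithinAt
      rw [hasFDerivAt_pi']
      intro i
      have h1 : HasFDerivAt (fun x : Fin n → ℝ => s * x i)
          (s • ContinuousLinearMap.proj (R := ℝ) (φ := fun _ : Fin n => ℝ) i) x := by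
        have hp : HasFDerivAt (fun x : Fin n → ℝ => x i)
            (ContinuousLinearMap.proj (R := ℝ) (φ := fun _ : Fin n => ℝ) i) x :=
          (ContinuousLinearMap.proj (R := ℝ) (φ := fun _ : Fin n => ℝ) i).hasFDerivAt
        exact hp.const_mul s
      refine h1.congr_fderiv (ContinuousLinearMap.ext fun y => ?_)
      simp [hφ']
    have hinj : Set.InjOn (fun x : Fin n → ℝ => fun i => s * x i)
        (Set.univ.pi fun _ : Fin n => Set.Ioi (0 : ℝ)) :=
      fun x _ y _ h => funext fun i => mul_left_cancel₀ hs.ne' (congrFun h i)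
    have himg : (fun x : Fin n → ℝ => fun i => s * x i) ''
        (Set.univ.pi fun _ : Fin n => Set.Ioi (0 : ℝ))
        = (Set.univ.pi fun _ : Fin n => Set.Ioi (0 : ℝ)) := by
      ext y
      constructor
      · rintro ⟨x, hx, rfl⟩
        exact (hmem _).2 fun i => mul_pos hs ((hmem x).1 hx i)
      · intro hy
        refine ⟨fun i => s⁻¹ * y i, (hmem _).2 fun i =>
          mul_pos (inv_pos.2 hs) ((hmem y).1 hy i), funext fun i => ?_⟩
        field_simp
    have key := lintegral_image_eq_lintegral_abs_det_fderiv_mul volume hΩ hderiv hinj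
      (fun x => f x * ENNReal.ofReal ((∏ i, x i) ^ (-μ₀ - 1) * weightA n k x))
    rw [himg] at key
    rw [key]
    apply setLIntegral_congr_fun hΩ
    intro x hx
    have hx' : ∀ i, 0 < x i := (hmem x).1 hx
    have hdet : (φ' x).det = ∏ _i : Fin n, s := det_pi_smul _
    have hdetabs : |(φ' x).det| = s ^ (n : ℕ) := by
      rw [hdet, Finset.prod_const, Finset.card_univ, Fintype.card_fin,
        abs_of_pos (pow_pos hs n)]
    have hA : (0:ℝ) ≤ s ^ (n : ℕ) := (pow_pos hs n).le
    simp only [hdetabs]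
    rw [mul_left_comm, ← ENNReal.ofReal_mul hA]
    rw [show (s ^ (n : ℕ)) *
        ((∏ i, (s * x i)) ^ (-μ₀ - 1) * weightA n k (fun i => s * x i))
        = (∏ i, x i) ^ (-μ₀ - 1) * weightA n k x from
      density_smul_eq hn k μ₀ hμ₀ hs x hx']
end

section
/- For every μ ∈ ℂ and every generic x ∈ ℝⁿ, Δ(T^B)² ( y ↦ ∏_{i=1}^n (y_i²)^{μ} )(x) = 𝓑(μ) · ∏_{i=1}^n (x_i²)^{μ−1}, where 𝓑(μ) := 4ⁿ ∏_{j=1}^n (μ + k(j−1)) (μ − 1/2 + k' + k(j−1)) and (y_i²)^{μ} denotes the complex power of the positive real y_i² (type-B Bernstein identity). -/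
noncomputable section

open Real Complex

/-- Swap of coordinates `i` and `j`. -/
def sSwap {n : ℕ} (i j : Fin n) (x : Fin n → ℝ) : Fin n → ℝ := x ∘ Equiv.swap i j

/-- Sign flip of coordinate `i`. -/
def sigmaFlip {n : ℕ} (i : Fin n) (x : Fin n → ℝ) : Fin n → ℝ :=
  fun l => if l = i then -x l else x l

/-- Swap of coordinates `i`, `j` together with a sign flip of both. -/
def sigmaSwapFlip {n : ℕ} (i j : Fin n) (x : Fin n → ℝ) : Fin n → ℝ :=
  fun l => if l = i ∨ l = j then -x (Equiv.swap i j l) else x (Equiv.swap i j l)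

/-- The type-B Dunkl operator `T_i^B` on complex-valued functions (pointwise formula). -/
def dunklB {n : ℕ} (k k' : ℝ) (i : Fin n) (f : (Fin n → ℝ) → ℂ) :
    (Fin n → ℝ) → ℂ :=
  fun x => fderiv ℝ f x (Pi.single i 1) +
    (k' : ℂ) * (f x - f (sigmaFlip i x)) / (x i : ℂ) +
    (k : ℂ) * ∑ j ∈ Finset.univ.erase i,
      ((f x - f (sSwap i j x)) / ((x i : ℂ) - (x j : ℂ)) +
        (f x - f (sigmaSwapFlip i j x)) / ((x i : ℂ) + (x j : ℂ)))

/-- `Δ(T^B)² = (T_1^B)² ∘ ⋯ ∘ (T_n^B)²`. -/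
def deltaTBsq {n : ℕ} (k k' : ℝ) : ((Fin n → ℝ) → ℂ) → ((Fin n → ℝ) → ℂ) :=
  (List.finRange n).foldr (fun i F => dunklB k k' i ∘ dunklB k k' i ∘ F) id

/-- A point is generic if all coordinates are nonzero and the squares of the
coordinates are pairwise distinct. -/
def Generic {n : ℕ} (x : Fin n → ℝ) : Prop :=
  (∀ i, x i ≠ 0) ∧ ∀ i j, x i ^ 2 = x j ^ 2 → i = j

open Finset

variable {n : ℕ}

def bPow {n : ℕ} (γ : Fin n → ℂ) (x : Fin n → ℝ) : ℂ := ∏ j, ((x j ^ 2 : ℝ) : ℂ) ^ γ j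
lemma hasDerivAt_sq_cpow (γ : ℂ) {t : ℝ} (ht : t ≠ 0) :
    HasDerivAt (fun s : ℝ => ((s^2 : ℝ):ℂ) ^ γ) (2 * γ * ((t^2:ℝ):ℂ)^γ / t) t := by
  have htc : (t:ℂ) ≠ 0 := by exact_mod_cast ht
  have h2 : HasDerivAt (fun z : ℂ => (z^2) ^ γ) (γ * ((t:ℂ)^2)^(γ-1) * (2*(t:ℂ)^1)) (t:ℂ) :=
    (hasDerivAt_pow 2 (t:ℂ)).cpow_const (by
      rw [show ((t:ℂ)^2) = ((t^2:ℝ):ℂ) by push_cast; ring]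
      exact Complex.ofReal_mem_slitPlane.2 (by positivity))
  have h3 := h2.comp_ofReal
  have he : (fun s : ℝ => ((s^2:ℝ):ℂ)^γ) = (fun s : ℝ => (((s:ℂ))^2)^γ) := by
    funext s; push_cast; ring_nf
  rw [he]
  convert h3 using 1
  rw [Complex.cpow_sub _ _ (by simpa using pow_ne_zero 2 htc)]
  push_cast
  field_simp
  ring_nf
  simp [Complex.cpow_one]

-- fderiv of one factor as a function on Fin n → ℝ
lemma hasFDerivAt_factor (γ : ℂ) (j : Fin n) (x : Fin n → ℝ) (hx : x j ≠ 0) :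
    HasFDerivAt (fun y : Fin n → ℝ => ((y j ^ 2 : ℝ) : ℂ) ^ γ)
      ((ContinuousLinearMap.smulRight (1 : ℝ →L[ℝ] ℝ) (2 * γ * ((x j^2:ℝ):ℂ)^γ / x j)).comp
        (ContinuousLinearMap.proj j)) x := by
  have h1 := (hasDerivAt_sq_cpow γ hx).hasFDerivAt
  exact h1.comp x (ContinuousLinearMap.proj j : (Fin n → ℝ) →L[ℝ] ℝ).hasFDerivAt

lemma hasFDerivAt_bPow (γ : Fin n → ℂ) (x : Fin n → ℝ) (hx : ∀ j, x j ≠ 0) :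
    HasFDerivAt (bPow γ)
      (∑ j, (∏ l ∈ univ.erase j, ((x l ^ 2 : ℝ) : ℂ) ^ γ l) •
        ((ContinuousLinearMap.smulRight (1 : ℝ →L[ℝ] ℝ) (2 * γ j * ((x j^2:ℝ):ℂ)^(γ j) / x j)).comp
          (ContinuousLinearMap.proj j))) x := by
  exact HasFDerivAt.finset_prod (fun j _ => hasFDerivAt_factor (γ j) j x (hx j))

lemma fderiv_bPow_single (γ : Fin n → ℂ) (x : Fin n → ℝ) (hx : ∀ j, x j ≠ 0) (i : Fin n) :
    fderiv ℝ (bPow γ) x (Pi.single i 1) = 2 * γ i / (x i) * bPow γ x := by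
  rw [(hasFDerivAt_bPow γ x hx).fderiv]
  rw [ContinuousLinearMap.sum_apply]
  rw [Finset.sum_eq_single i]
  · have hb : bPow γ x = ((x i^2:ℝ):ℂ)^(γ i) * ∏ l ∈ univ.erase i, ((x l^2:ℝ):ℂ)^(γ l) :=
      (Finset.mul_prod_erase _ _ (mem_univ i)).symm
    have hxi : (x i : ℂ) ≠ 0 := by exact_mod_cast hx i
    simp only [ContinuousLinearMap.smul_apply, ContinuousLinearMap.comp_apply,
      ContinuousLinearMap.proj_apply, Pi.single_eq_same, ContinuousLinearMap.smulRight_apply,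
      ContinuousLinearMap.one_apply, one_smul, smul_eq_mul]
    rw [hb]; push_cast; field_simp
  · intro j _ hj
    simp only [ContinuousLinearMap.smul_apply, ContinuousLinearMap.comp_apply,
      ContinuousLinearMap.proj_apply, Pi.single_eq_of_ne hj, ContinuousLinearMap.smulRight_apply,
      ContinuousLinearMap.one_apply, one_smul, smul_eq_mul, zero_smul, mul_zero]
  · simp
lemma fderiv_CbPow_single (C : ℂ) (γ : Fin n → ℂ) (x : Fin n → ℝ) (hx : ∀ j, x j ≠ 0) (i : Fin n) :
    fderiv ℝ (fun y => C * bPow γ y) x (Pi.single i 1) = C * (2 * γ i / (x i) * bPow γ x) := by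
  have h := (hasFDerivAt_bPow γ x hx).const_mul C
  rw [h.fderiv]
  have h2 := fderiv_bPow_single γ x hx i
  rw [(hasFDerivAt_bPow γ x hx).fderiv] at h2
  simp only [ContinuousLinearMap.smul_apply, smul_eq_mul, h2]

lemma hasFDerivAt_xi_bPow (C : ℂ) (γ : Fin n → ℂ) (x : Fin n → ℝ) (hx : ∀ j, x j ≠ 0) (i : Fin n) :
    HasFDerivAt (fun y => C * (((y i : ℝ):ℂ) * bPow γ y))
      (C • (((x i : ℝ):ℂ) • (∑ j, (∏ l ∈ univ.erase j, ((x l ^ 2 : ℝ) : ℂ) ^ γ l) •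
        ((ContinuousLinearMap.smulRight (1 : ℝ →L[ℝ] ℝ) (2 * γ j * ((x j^2:ℝ):ℂ)^(γ j) / x j)).comp
          (ContinuousLinearMap.proj j)))
        + bPow γ x • (Complex.ofRealCLM.comp (ContinuousLinearMap.proj i)))) x := by
  have h1 : HasFDerivAt (fun y : Fin n → ℝ => ((y i : ℝ):ℂ))
      (Complex.ofRealCLM.comp (ContinuousLinearMap.proj i)) x :=
by
    have h := (Complex.ofRealCLM.comp
      ((ContinuousLinearMap.proj i : (Fin n → ℝ) →L[ℝ] ℝ))).hasFDerivAt (x := x)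
    exact h
  exact (h1.mul (hasFDerivAt_bPow γ x hx)).const_mul C

lemma fderiv_CxibPow_single (C : ℂ) (γ : Fin n → ℂ) (x : Fin n → ℝ) (hx : ∀ j, x j ≠ 0) (i : Fin n) :
    fderiv ℝ (fun y => C * (((y i : ℝ):ℂ) * bPow γ y)) x (Pi.single i 1)
      = C * ((2 * γ i + 1) * bPow γ x) := by
  rw [(hasFDerivAt_xi_bPow C γ x hx i).fderiv]
  have h2 := fderiv_bPow_single γ x hx i
  rw [(hasFDerivAt_bPow γ x hx).fderiv] at h2
  have hxi : (x i : ℂ) ≠ 0 := by exact_mod_cast hx i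
  simp only [ContinuousLinearMap.smul_apply, ContinuousLinearMap.add_apply, smul_eq_mul, h2,
    ContinuousLinearMap.comp_apply, ContinuousLinearMap.proj_apply, Pi.single_eq_same,
    Complex.ofRealCLM_apply, Complex.ofReal_one]
  have h3 : ((x i:ℝ):ℂ) * (2 * γ i / (x i) * bPow γ x) = 2 * γ i * bPow γ x := by
    field_simp
  rw [h3]; ring

lemma sigmaFlip_sq (i : Fin n) (x : Fin n → ℝ) (l : Fin n) :
    (sigmaFlip i x) l ^ 2 = x l ^ 2 := by
  unfold sigmaFlip; split <;> ring

lemma sSwap_apply (i j : Fin n) (x : Fin n → ℝ) (l : Fin n) :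
    (sSwap i j x) l = x (Equiv.swap i j l) := rfl

lemma sigmaSwapFlip_sq (i j : Fin n) (x : Fin n → ℝ) (l : Fin n) :
    (sigmaSwapFlip i j x) l ^ 2 = x (Equiv.swap i j l) ^ 2 := by
  unfold sigmaSwapFlip; split <;> ring

lemma generic_sigmaFlip {x : Fin n → ℝ} (hx : Generic x) (i : Fin n) :
    Generic (sigmaFlip i x) := by
  obtain ⟨h1, h2⟩ := hx
  constructor
  · intro l; unfold sigmaFlip; split <;> simp [h1 l]
  · intro a b hab; rw [sigmaFlip_sq, sigmaFlip_sq] at hab; exact h2 a b hab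

lemma generic_sSwap {x : Fin n → ℝ} (hx : Generic x) (i j : Fin n) :
    Generic (sSwap i j x) := by
  obtain ⟨h1, h2⟩ := hx
  constructor
  · intro l; exact h1 _
  · intro a b hab
    rw [sSwap_apply, sSwap_apply] at hab
    have := h2 _ _ hab
    exact (Equiv.swap i j).injective this

lemma generic_sigmaSwapFlip {x : Fin n → ℝ} (hx : Generic x) (i j : Fin n) :
    Generic (sigmaSwapFlip i j x) := by
  obtain ⟨h1, h2⟩ := hx
  constructor
  · intro l; unfold sigmaSwapFlip; split <;> simp [h1 _]
  · intro a b hab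
    rw [sigmaSwapFlip_sq, sigmaSwapFlip_sq] at hab
    exact (Equiv.swap i j).injective (h2 _ _ hab)

lemma bPow_sigmaFlip (γ : Fin n → ℂ) (x : Fin n → ℝ) (i : Fin n) :
    bPow γ (sigmaFlip i x) = bPow γ x := by
  unfold bPow
  exact Finset.prod_congr rfl fun l _ => by rw [sigmaFlip_sq]

lemma bPow_sSwap (γ : Fin n → ℂ) (x : Fin n → ℝ) (i j : Fin n) :
    bPow γ (sSwap i j x) = bPow (fun l => γ (Equiv.swap i j l)) x := by
  unfold bPow
  have h := Equiv.prod_comp (Equiv.swap i j)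
    (fun l => ((x l ^ 2 : ℝ) : ℂ) ^ (γ (Equiv.swap i j l)))
  rw [← h]
  refine Finset.prod_congr rfl fun l _ => ?_
  rw [sSwap_apply, Equiv.swap_apply_self]

lemma bPow_sigmaSwapFlip (γ : Fin n → ℂ) (x : Fin n → ℝ) (i j : Fin n) :
    bPow γ (sigmaSwapFlip i j x) = bPow (fun l => γ (Equiv.swap i j l)) x := by
  unfold bPow
  have h := Equiv.prod_comp (Equiv.swap i j)
    (fun l => ((x l ^ 2 : ℝ) : ℂ) ^ (γ (Equiv.swap i j l)))
  rw [← h]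
  refine Finset.prod_congr rfl fun l _ => ?_
  rw [sigmaSwapFlip_sq, Equiv.swap_apply_self]

-- genericity is open
lemma isOpen_generic : IsOpen {x : Fin n → ℝ | Generic x} := by
  have heq : {x : Fin n → ℝ | Generic x} =
      (⋂ i, {x : Fin n → ℝ | x i ≠ 0}) ∩
      ⋂ i, ⋂ j, {x : Fin n → ℝ | x i ^ 2 = x j ^ 2 → i = j} := by
    ext x
    simp only [Set.mem_setOf_eq, Set.mem_inter_iff, Set.mem_iInter, Generic]
  rw [heq]
  refine IsOpen.inter (isOpen_iInter_of_finite fun i => ?_)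
    (isOpen_iInter_of_finite fun i => isOpen_iInter_of_finite fun j => ?_)
  · exact isOpen_compl_singleton.preimage (continuous_apply i)
  · by_cases hij : i = j
    · simp [hij, Set.setOf_true]
    · have : {x : Fin n → ℝ | x i ^ 2 = x j ^ 2 → i = j}
          = (fun x : Fin n → ℝ => x i ^ 2 - x j ^ 2) ⁻¹' {(0:ℝ)}ᶜ := by
        ext x
        simp only [Set.mem_setOf_eq, Set.mem_preimage, Set.mem_compl_iff,
          Set.mem_singleton_iff, sub_eq_zero]
        constructor
        · intro h h'; exact hij (h h')
        · intro h h'; exact absurd h' h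
      rw [this]
      exact isOpen_compl_singleton.preimage
        (((continuous_apply i).pow 2).sub ((continuous_apply j).pow 2))

lemma generic_sub_ne {x : Fin n → ℝ} (hx : Generic x) {i j : Fin n} (hij : i ≠ j) :
    ((x i : ℝ):ℂ) - ((x j : ℝ):ℂ) ≠ 0 := by
  intro h
  rw [sub_eq_zero] at h
  have : x i = x j := by exact_mod_cast h
  exact hij (hx.2 i j (by rw [this]))

lemma generic_add_ne {x : Fin n → ℝ} (hx : Generic x) {i j : Fin n} (hij : i ≠ j) :
    ((x i : ℝ):ℂ) + ((x j : ℝ):ℂ) ≠ 0 := by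
  intro h
  have h2 : x i = -x j := by
    have : ((x i : ℝ):ℂ) = -((x j : ℝ):ℂ) := by linear_combination h
    exact_mod_cast this
  exact hij (hx.2 i j (by rw [h2]; ring))

lemma sq_cast_ne {x : Fin n → ℝ} (hx : Generic x) (i : Fin n) :
    ((x i ^ 2 : ℝ):ℂ) ≠ 0 := by
  simp [pow_eq_zero_iff, hx.1 i]

lemma cpow_succ' {a : ℂ} (ha : a ≠ 0) (g : ℂ) : a ^ g = a ^ (g - 1) * a := by
  nth_rewrite 1 [show g = (g-1) + 1 by ring]
  rw [Complex.cpow_add _ _ ha, Complex.cpow_one]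

lemma bPow_split (γ : Fin n → ℂ) (x : Fin n → ℝ) {i j : Fin n} (hij : i ≠ j) :
    bPow γ x = ((x i ^ 2:ℝ):ℂ) ^ (γ i) * (((x j ^ 2:ℝ):ℂ) ^ (γ j) *
      ∏ l ∈ (univ.erase i).erase j, ((x l ^ 2:ℝ):ℂ) ^ (γ l)) := by
  unfold bPow
  rw [← Finset.mul_prod_erase _ _ (Finset.mem_univ i),
    ← Finset.mul_prod_erase _ _ (Finset.mem_erase.2 ⟨hij.symm, Finset.mem_univ j⟩)]

lemma bPow_swap_split (γ : Fin n → ℂ) (x : Fin n → ℝ) {i j : Fin n} (hij : i ≠ j) :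
    bPow (fun l => γ (Equiv.swap i j l)) x = ((x i ^ 2:ℝ):ℂ) ^ (γ j) * (((x j ^ 2:ℝ):ℂ) ^ (γ i) *
      ∏ l ∈ (univ.erase i).erase j, ((x l ^ 2:ℝ):ℂ) ^ (γ l)) := by
  rw [bPow_split (fun l => γ (Equiv.swap i j l)) x hij]
  rw [Equiv.swap_apply_left, Equiv.swap_apply_right]
  congr 2
  refine Finset.prod_congr rfl fun l hl => ?_
  simp only [Finset.mem_erase] at hl
  rw [Equiv.swap_apply_of_ne_of_ne hl.2.1 hl.1]

lemma bPow_swap_eq (γ : Fin n → ℂ) (x : Fin n → ℝ) {i j : Fin n} (hγ : γ j = γ i) :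
    bPow (fun l => γ (Equiv.swap i j l)) x = bPow γ x := by
  have : (fun l => γ (Equiv.swap i j l)) = γ := by
    funext l
    rcases eq_or_ne l i with rfl | hi
    · rw [Equiv.swap_apply_left, hγ]
    rcases eq_or_ne l j with rfl | hj
    · rw [Equiv.swap_apply_right, hγ]
    · rw [Equiv.swap_apply_of_ne_of_ne hi hj]
  rw [this]

lemma bPow_update (γ : Fin n → ℂ) (x : Fin n → ℝ) {i : Fin n} (hxi : ((x i ^2:ℝ):ℂ) ≠ 0) :
    bPow γ x = ((x i:ℝ):ℂ)^2 * bPow (Function.update γ i (γ i - 1)) x := by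
  unfold bPow
  rw [← Finset.mul_prod_erase _ _ (Finset.mem_univ i),
    ← Finset.mul_prod_erase univ (fun l => ((x l ^2:ℝ):ℂ) ^ (Function.update γ i (γ i -1) l))
      (Finset.mem_univ i)]
  simp only [Function.update_self]
  rw [cpow_succ' hxi (γ i)]
  have : ∀ l ∈ univ.erase i, ((x l ^2:ℝ):ℂ) ^ (Function.update γ i (γ i -1) l)
      = ((x l ^2:ℝ):ℂ) ^ (γ l) := by
    intro l hl
    rw [Function.update_of_ne (Finset.mem_erase.1 hl).1]
  rw [Finset.prod_congr rfl this]
  push_cast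
  ring

-- Lemma B : first-application cross term, j > i flavor (γ j = γ i - 1)
lemma termB {x : Fin n → ℝ} (hx : Generic x) {i j : Fin n} (hij : i ≠ j)
    (γ : Fin n → ℂ) (hγ : γ j = γ i - 1) (C : ℂ) :
    (C * bPow γ x - C * bPow (fun l => γ (Equiv.swap i j l)) x) / (((x i:ℝ):ℂ) - x j)
      + (C * bPow γ x - C * bPow (fun l => γ (Equiv.swap i j l)) x) / (((x i:ℝ):ℂ) + x j)
      = 2 * (C * bPow γ x) / ((x i :ℝ):ℂ) := by
  have ha := sq_cast_ne hx i
  have hb := sq_cast_ne hx j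
  have hxi : ((x i:ℝ):ℂ) ≠ 0 := by exact_mod_cast hx.1 i
  have hsub := generic_sub_ne hx hij
  have hadd := generic_add_ne hx hij
  rw [bPow_split γ x hij, bPow_swap_split γ x hij, hγ,
    cpow_succ' ha (γ i), cpow_succ' hb (γ i)]
  set A := ((x i ^2:ℝ):ℂ) ^ (γ i - 1)
  set B := ((x j ^2:ℝ):ℂ) ^ (γ i - 1)
  set R := ∏ l ∈ (univ.erase i).erase j, ((x l ^ 2:ℝ):ℂ) ^ (γ l)
  have hca : ((x i ^2:ℝ):ℂ) = ((x i:ℝ):ℂ)^2 := by push_cast; ring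
  have hcb : ((x j ^2:ℝ):ℂ) = ((x j:ℝ):ℂ)^2 := by push_cast; ring
  rw [hca, hcb]
  field_simp
  ring

-- Lemma C : second-application cross term, γ' j = γ' i flavor
lemma termC {x : Fin n → ℝ} (hx : Generic x) {i j : Fin n} (hij : i ≠ j) (C : ℂ)
    (P : ℂ) :
    (C * (((x i:ℝ):ℂ) * P) - C * (((x j:ℝ):ℂ) * P)) / (((x i:ℝ):ℂ) - x j)
      + (C * (((x i:ℝ):ℂ) * P) - C * ((-((x j:ℝ):ℂ)) * P)) / (((x i:ℝ):ℂ) + x j)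
      = 2 * (C * P) := by
  have hsub := generic_sub_ne hx hij
  have hadd := generic_add_ne hx hij
  field_simp
  ring

-- Lemma D : second-application cross term, γ' j = γ' i + 1 flavor: cancels
lemma termD {x : Fin n → ℝ} (hx : Generic x) {i j : Fin n} (hij : i ≠ j)
    (γ : Fin n → ℂ) (hγ : γ j = γ i + 1) (C : ℂ) :
    (C * (((x i:ℝ):ℂ) * bPow γ x) - C * (((x j:ℝ):ℂ) * bPow (fun l => γ (Equiv.swap i j l)) x))
        / (((x i:ℝ):ℂ) - x j)
      + (C * (((x i:ℝ):ℂ) * bPow γ x) - C * ((-((x j:ℝ):ℂ)) * bPow (fun l => γ (Equiv.swap i j l)) x))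
        / (((x i:ℝ):ℂ) + x j)
      = 0 := by
  have ha := sq_cast_ne hx i
  have hb := sq_cast_ne hx j
  have hsub := generic_sub_ne hx hij
  have hadd := generic_add_ne hx hij
  rw [bPow_split γ x hij, bPow_swap_split γ x hij, hγ,
    cpow_succ' hb (γ i + 1), cpow_succ' ha (γ i + 1)]
  have e1 : γ i + 1 - 1 = γ i := by ring
  rw [e1]
  set A := ((x i ^2:ℝ):ℂ) ^ (γ i)
  set B := ((x j ^2:ℝ):ℂ) ^ (γ i)
  set R := ∏ l ∈ (univ.erase i).erase j, ((x l ^ 2:ℝ):ℂ) ^ (γ l)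
  have hca : ((x i ^2:ℝ):ℂ) = ((x i:ℝ):ℂ)^2 := by push_cast; ring
  have hcb : ((x j ^2:ℝ):ℂ) = ((x j:ℝ):ℂ)^2 := by push_cast; ring
  rw [hca, hcb]
  field_simp
  ring
lemma filter_gt_eq (i : Fin n) : (univ.erase i).filter (fun j => i < j) = Finset.Ioi i := by
  ext j
  simp only [Finset.mem_filter, Finset.mem_erase, Finset.mem_Ioi, Finset.mem_univ, true_and,
    and_true]
  constructor
  · exact fun h => h.2
  · exact fun h => ⟨(ne_of_gt h), h⟩

lemma sigmaFlip_self (i : Fin n) (x : Fin n → ℝ) : (sigmaFlip i x) i = -x i := by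
  simp [sigmaFlip]

lemma sSwap_self (i j : Fin n) (x : Fin n → ℝ) : (sSwap i j x) i = x j := by
  simp [sSwap, Equiv.swap_apply_left]

lemma sigmaSwapFlip_self (i j : Fin n) (x : Fin n → ℝ) : (sigmaSwapFlip i j x) i = -x j := by
  simp [sigmaSwapFlip, Equiv.swap_apply_left]

lemma dunkl_first (k k' : ℝ) (i : Fin n) (γ : Fin n → ℂ) (C : ℂ) (x : Fin n → ℝ) (hx : Generic x)
    (hlt : ∀ j, j < i → γ j = γ i) (hgt : ∀ j, i < j → γ j = γ i - 1) :
    dunklB k k' i (fun y => C * bPow γ y) x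
      = (2 * (γ i + (k:ℂ) * ((n - 1 - (i:ℕ) : ℕ) : ℂ)) * C) *
        (((x i:ℝ):ℂ) * bPow (Function.update γ i (γ i - 1)) x) := by
  have hx0 := hx.1
  have hxi : ((x i:ℝ):ℂ) ≠ 0 := by exact_mod_cast hx.1 i
  have hxisq : ((x i ^2:ℝ):ℂ) ≠ 0 := by
    simp [pow_eq_zero_iff, hx.1 i]
  simp only [dunklB]
  rw [fderiv_CbPow_single C γ x hx0 i, bPow_sigmaFlip]
  have h3 : ∀ j ∈ univ.erase i,
      ((C * bPow γ x - C * bPow γ (sSwap i j x)) / (((x i:ℝ):ℂ) - x j) +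
        (C * bPow γ x - C * bPow γ (sigmaSwapFlip i j x)) / (((x i:ℝ):ℂ) + x j))
      = if i < j then 2 * (C * bPow γ x) / ((x i:ℝ):ℂ) else 0 := by
    intro j hj
    have hji : j ≠ i := (Finset.mem_erase.1 hj).1
    rw [bPow_sSwap, bPow_sigmaSwapFlip]
    rcases lt_or_gt_of_ne hji with hlt1 | hgt1
    · rw [if_neg (not_lt.2 hlt1.le)]
      rw [bPow_swap_eq γ x (hlt j hlt1)]
      simp
    · rw [if_pos hgt1]
      exact termB hx (Ne.symm hji) γ (hgt j hgt1) C
  rw [Finset.sum_congr rfl h3, ← Finset.sum_filter, filter_gt_eq, Finset.sum_const,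
    Fin.card_Ioi, nsmul_eq_mul]
  rw [bPow_update γ x hxisq]
  simp only [sub_self, mul_zero, zero_div, zero_mul, add_zero]
  field_simp

lemma dunkl_second (k k' : ℝ) (i : Fin n) (γ : Fin n → ℂ) (C : ℂ) (x : Fin n → ℝ)
    (hx : Generic x)
    (hlt : ∀ j, j < i → γ j = γ i + 1) (hgt : ∀ j, i < j → γ j = γ i) :
    dunklB k k' i (fun y => C * (((y i:ℝ):ℂ) * bPow γ y)) x
      = (C * (2 * γ i + 1 + 2*(k':ℂ) + 2*(k:ℂ)*((n - 1 - (i:ℕ) : ℕ):ℂ))) * bPow γ x := by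
  have hx0 := hx.1
  have hxi : ((x i:ℝ):ℂ) ≠ 0 := by exact_mod_cast hx.1 i
  simp only [dunklB]
  rw [fderiv_CxibPow_single C γ x hx0 i]
  have h2 : (k':ℂ) * (C * (((x i:ℝ):ℂ) * bPow γ x)
      - C * ((((sigmaFlip i x) i : ℝ):ℂ) * bPow γ (sigmaFlip i x))) / ((x i:ℝ):ℂ)
      = 2 * (k':ℂ) * C * bPow γ x := by
    rw [bPow_sigmaFlip, sigmaFlip_self]
    push_cast
    field_simp
    ring
  rw [h2]
  have h3 : ∀ j ∈ univ.erase i,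
      ((C * (((x i:ℝ):ℂ) * bPow γ x) - C * ((((sSwap i j x) i : ℝ):ℂ) * bPow γ (sSwap i j x)))
          / (((x i:ℝ):ℂ) - x j) +
        (C * (((x i:ℝ):ℂ) * bPow γ x)
            - C * ((((sigmaSwapFlip i j x) i : ℝ):ℂ) * bPow γ (sigmaSwapFlip i j x)))
          / (((x i:ℝ):ℂ) + x j))
      = if i < j then 2 * (C * bPow γ x) else 0 := by
    intro j hj
    have hji : j ≠ i := (Finset.mem_erase.1 hj).1
    rw [bPow_sSwap, bPow_sigmaSwapFlip, sSwap_self, sigmaSwapFlip_self]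
    rcases lt_or_gt_of_ne hji with hlt1 | hgt1
    · rw [if_neg (not_lt.2 hlt1.le)]
      have := termD hx (Ne.symm hji) γ (hlt j hlt1) C
      push_cast at this ⊢
      exact this
    · rw [if_pos hgt1]
      rw [bPow_swap_eq γ x (hgt j hgt1)]
      have := termC hx (Ne.symm hji) C (bPow γ x)
      push_cast at this ⊢
      exact this
  rw [Finset.sum_congr rfl h3, ← Finset.sum_filter, filter_gt_eq, Finset.sum_const,
    Fin.card_Ioi, nsmul_eq_mul]
  ring
lemma dunklB_congr {k k' : ℝ} {i : Fin n} {f g : (Fin n → ℝ) → ℂ} {x : Fin n → ℝ}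
    (hfg : ∀ y, Generic y → f y = g y) (hx : Generic x) :
    dunklB k k' i f x = dunklB k k' i g x := by
  have hU : IsOpen {y : Fin n → ℝ | Generic y} := isOpen_generic
  have hev : f =ᶠ[nhds x] g := Filter.eventually_of_mem (hU.mem_nhds hx) (fun y hy => hfg y hy)
  simp only [dunklB]
  rw [hev.fderiv_eq, hfg x hx, hfg _ (generic_sigmaFlip hx i)]
  congr 2
  refine Finset.sum_congr rfl fun j _ => ?_
  rw [hfg _ (generic_sSwap hx i j), hfg _ (generic_sigmaSwapFlip hx i j)]

lemma dunkl_sq (k k' : ℝ) (i : Fin n) (γ : Fin n → ℂ) (C : ℂ) (x : Fin n → ℝ) (hx : Generic x)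
    (hlt : ∀ j, j < i → γ j = γ i) (hgt : ∀ j, i < j → γ j = γ i - 1) :
    dunklB k k' i (dunklB k k' i (fun y => C * bPow γ y)) x
      = (C * (4 * ((γ i + (k:ℂ) * ((n - 1 - (i:ℕ) : ℕ):ℂ)) *
          (γ i - 1/2 + (k':ℂ) + (k:ℂ) * ((n - 1 - (i:ℕ) : ℕ):ℂ))))) *
        bPow (Function.update γ i (γ i - 1)) x := by
  set p : ℂ := ((n - 1 - (i:ℕ) : ℕ):ℂ)
  set C' : ℂ := 2 * (γ i + (k:ℂ) * p) * C
  set γ' : Fin n → ℂ := Function.update γ i (γ i - 1)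
  have step1 : dunklB k k' i (dunklB k k' i (fun y => C * bPow γ y)) x
      = dunklB k k' i (fun y => C' * (((y i:ℝ):ℂ) * bPow γ' y)) x := by
    refine dunklB_congr (fun y hy => ?_) hx
    exact dunkl_first k k' i γ C y hy hlt hgt
  rw [step1]
  have hγ'i : γ' i = γ i - 1 := Function.update_self i (γ i - 1) γ
  have hlt' : ∀ j, j < i → γ' j = γ' i + 1 := by
    intro j hj
    rw [hγ'i]
    show Function.update γ i (γ i - 1) j = _
    rw [Function.update_of_ne (ne_of_lt hj) _ γ, hlt j hj]
    ring
  have hgt' : ∀ j, i < j → γ' j = γ' i := by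
    intro j hj
    rw [hγ'i]
    show Function.update γ i (γ i - 1) j = _
    rw [Function.update_of_ne (ne_of_gt hj) _ γ, hgt j hj]
  rw [dunkl_second k k' i γ' C' x hx hlt' hgt', hγ'i]
  simp only [C']
  ring
def γstage (n : ℕ) (μ : ℂ) (m : ℕ) : Fin n → ℂ := fun j => if (j:ℕ) < m then μ else μ - 1

lemma γstage_update (μ : ℂ) (m : ℕ) (hm : m < n) :
    Function.update (γstage n μ (m+1)) ⟨m, hm⟩ (γstage n μ (m+1) ⟨m, hm⟩ - 1)
      = γstage n μ m := by
  funext j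
  rcases eq_or_ne j ⟨m, hm⟩ with rfl | hj
  · rw [Function.update_self]
    simp only [γstage]
    norm_num
  · rw [Function.update_of_ne hj]
    have hjm : (j:ℕ) ≠ m := fun h => hj (Fin.ext h)
    simp only [γstage]
    by_cases h : (j:ℕ) < m
    · rw [if_pos h, if_pos (by omega)]
    · rw [if_neg h, if_neg (by omega)]

lemma main_ind (k k' : ℝ) (μ : ℂ) (t : ℕ) (ht : t ≤ n) :
    ∀ x : Fin n → ℝ, Generic x →
      ((List.finRange n).drop (n - t)).foldr (fun i F => dunklB k k' i ∘ dunklB k k' i ∘ F) id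
        (bPow (γstage n μ n)) x
      = (∏ j ∈ Finset.range t, (4 * ((μ + (k:ℂ)*j) * (μ - 1/2 + (k':ℂ) + (k:ℂ)*j)))) *
        bPow (γstage n μ (n - t)) x := by
  induction t with
  | zero =>
    intro x hx
    rw [Nat.sub_zero, show (List.finRange n).drop n = [] from
      List.drop_eq_nil_of_le (by simp)]
    simp
  | succ t ih =>
    intro x hx
    have ht' : t ≤ n := Nat.le_of_succ_le ht
    have hm : n - (t+1) < n := by omega
    set m : ℕ := n - (t+1) with hmdef
    have hm1 : m + 1 = n - t := by omega
    have hdrop : (List.finRange n).drop m = ⟨m, hm⟩ :: (List.finRange n).drop (m+1) := by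
      rw [List.drop_eq_getElem_cons (by rw [List.length_finRange]; exact hm)]
      congr 1
      apply Fin.ext
      simp [List.getElem_finRange]
    rw [hdrop]
    simp only [List.foldr_cons, Function.comp_apply]
    set i : Fin n := ⟨m, hm⟩
    set Cp : ℂ := ∏ j ∈ Finset.range t, (4 * ((μ + (k:ℂ)*j) * (μ - 1/2 + (k':ℂ) + (k:ℂ)*j)))
    set γ : Fin n → ℂ := γstage n μ (m+1)
    have key : ∀ y, Generic y →
        dunklB k k' i (((List.finRange n).drop (m+1)).foldr
          (fun i F => dunklB k k' i ∘ dunklB k k' i ∘ F) id (bPow (γstage n μ n))) y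
        = dunklB k k' i (fun z => Cp * bPow γ z) y := by
      intro y hy
      refine dunklB_congr (fun z hz => ?_) hy
      have h := ih ht' z hz
      rw [← hm1] at h
      exact h
    have houter : dunklB k k' i (dunklB k k' i (((List.finRange n).drop (m+1)).foldr
          (fun i F => dunklB k k' i ∘ dunklB k k' i ∘ F) id (bPow (γstage n μ n)))) x
        = dunklB k k' i (dunklB k k' i (fun z => Cp * bPow γ z)) x :=
      dunklB_congr (fun y hy => key y hy) hx
    rw [houter]
    have hγi : γ i = μ := by simp [γ, γstage, i]
    have hlt : ∀ j, j < i → γ j = γ i := by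
      intro j hj
      have hjm : (j:ℕ) < m := hj
      rw [hγi]
      show (if (j:ℕ) < m + 1 then μ else μ - 1) = μ
      rw [if_pos (by omega)]
    have hgt : ∀ j, i < j → γ j = γ i - 1 := by
      intro j hj
      have hjm : m < (j:ℕ) := hj
      rw [hγi]
      show (if (j:ℕ) < m + 1 then μ else μ - 1) = μ - 1
      rw [if_neg (by omega)]
    rw [dunkl_sq k k' i γ Cp x hx hlt hgt]
    have hcast : ((n - 1 - (i:ℕ) : ℕ):ℂ) = (t:ℂ) := by
      congr 1
      simp only [i]
      omega
    rw [hγi] at hlt hgt ⊢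
    have hupd : Function.update γ i (μ - 1) = γstage n μ m := by
      have h := γstage_update (n := n) μ m hm
      have h2 : γstage n μ (m+1) ⟨m, hm⟩ = μ := hγi
      rw [h2] at h
      exact h
    rw [hupd, hcast]
    rw [Finset.prod_range_succ]


/-- type-B Bernstein identity:
`Δ(T^B)² Δ(x²)^μ = 𝓑(μ) Δ(x²)^{μ-1}` with
`𝓑(μ) = 4ⁿ ∏_{j=1}^n (μ + k(j-1))(μ - 1/2 + k' + k(j-1))`. -/
theorem bernstein_identity_typeB
    (n : ℕ) (hn : 1 ≤ n) (k : ℝ) (hk : 0 ≤ k) (k' : ℝ) (hk' : 0 < k')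
    (μ : ℂ) (x : Fin n → ℝ) (hx : Generic x) :
    deltaTBsq k k' (fun y => ∏ i, ((y i ^ 2 : ℝ) : ℂ) ^ μ) x
      = ((4 : ℂ) ^ n *
          ∏ j : Fin n, ((μ + (k : ℂ) * (j : ℕ)) *
            (μ - 1 / 2 + (k' : ℂ) + (k : ℂ) * (j : ℕ)))) *
        ∏ i, ((x i ^ 2 : ℝ) : ℂ) ^ (μ - 1) := by
  have hfn : (fun y : Fin n → ℝ => ∏ i, ((y i ^ 2 : ℝ) : ℂ) ^ μ) = bPow (γstage n μ n) := by
    funext y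
    exact Finset.prod_congr rfl fun j _ => by
      rw [show γstage n μ n j = μ from if_pos j.isLt]
  have h := main_ind k k' μ n le_rfl x hx
  rw [Nat.sub_self, List.drop_zero] at h
  simp only [deltaTBsq]
  rw [hfn, h]
  congr 1
  rw [Finset.prod_mul_distrib, Finset.prod_const, Finset.card_range]
  congr 1
  exact (Fin.prod_univ_eq_prod_range
    (fun j => (μ + (k:ℂ)*j) * (μ - 1/2 + (k':ℂ) + (k:ℂ)*j)) n).symm
end
end

section
/- Let s > 0 and σ ∈ ℝ. The function y ↦ ∏_{i=1}^n (s + y_i²)^{−σ/2} ∏_{1≤i<j≤n} |y_i − y_j|^{2k} is Lebesgue integrable over ℝⁿ if and only if σ > 2k(n−1) + 1 = 2μ₀ + 1. -/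
open MeasureTheory Real Set

lemma aux_rpow_le_max {a b c p : ℝ} (ha : 0 < a) (hab : a ≤ b) (hbc : b ≤ c) :
    b ^ p ≤ max (a ^ p) (c ^ p) := by
  rcases le_or_gt 0 p with hp | hp
  · exact (Real.rpow_le_rpow (ha.trans_le hab).le hbc hp).trans (le_max_right _ _)
  · exact (Real.rpow_le_rpow_of_nonpos ha hab hp.le).trans (le_max_left _ _)

lemma aux_integrable_one_add_sq {p : ℝ} (hp : p < -(1/2)) :
    Integrable fun y : ℝ => (1 + y ^ 2) ^ p := by
  have h := integrable_rpow_neg_one_add_norm_sq (E := ℝ) (μ := volume) (r := -(2*p))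
    (by simp; linarith)
  have e : ∀ y : ℝ, ((1 : ℝ) + ‖y‖ ^ 2) ^ (-(-(2*p)) / 2) = (1 + y ^ 2) ^ p := by
    intro y; rw [Real.norm_eq_abs, sq_abs]; norm_num
  simpa only [e] using h

lemma aux_prod_pairs {n : ℕ} (h : Fin n → ℝ) :
    ∏ i, ∏ j ∈ Finset.Ioi i, (h i * h j) = ∏ i, h i ^ (n - 1) := by
  have swap : (∏ i, ∏ j ∈ Finset.Ioi i, h j) = ∏ j, ∏ _i ∈ Finset.Iio j, h j :=
    Finset.prod_comm' (by simp)
  calc ∏ i, ∏ j ∈ Finset.Ioi i, (h i * h j)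
      = (∏ i, ∏ _j ∈ Finset.Ioi i, h i) * ∏ i, ∏ j ∈ Finset.Ioi i, h j := by
        rw [← Finset.prod_mul_distrib]; simp [Finset.prod_mul_distrib]
    _ = ∏ i, (h i ^ (Finset.Ioi i).card * h i ^ (Finset.Iio i).card) := by
        rw [swap, ← Finset.prod_mul_distrib]; simp
    _ = ∏ i, h i ^ (n - 1) := by
        refine Finset.prod_congr rfl fun i _ => ?_
        rw [← pow_add, Fin.card_Ioi, Fin.card_Iio]
        congr 1
        omega

lemma aux_integrable_dir
    (n : ℕ) (hn : 1 ≤ n) (k : ℝ) (hk : 0 ≤ k)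
    (μ₀ : ℝ) (hμ₀ : μ₀ = k * (n - 1))
    (s : ℝ) (hs : 0 < s) (σ : ℝ) (hσ : 2 * μ₀ + 1 < σ) :
    Integrable (fun y : Fin n → ℝ =>
      (∏ i, (s + y i ^ 2) ^ (-σ / 2)) *
        ∏ i : Fin n, ∏ j ∈ Finset.Ioi i, |y i - y j| ^ (2 * k)) := by
  set p : ℝ := μ₀ - σ/2 with hpdef
  have hp : p < -(1/2) := by rw [hpdef]; linarith
  have hG : Integrable fun y : ℝ => (1 + y ^ 2) ^ p := aux_integrable_one_add_sq hp
  set a := min s 1 with hadef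
  set b := max s 1 with hbdef
  have ha : 0 < a := lt_min hs one_pos
  set A := max (a ^ (-σ/2)) (b ^ (-σ/2)) with hAdef
  have hA : 0 < A := lt_max_of_lt_left (Real.rpow_pos_of_pos ha _)
  set D := ∏ _i : Fin n, ∏ _j ∈ Finset.Ioi _i, (2:ℝ)^k with hDdef
  have hD : 0 < D := Finset.prod_pos fun i _ => Finset.prod_pos fun j _ =>
    Real.rpow_pos_of_pos two_pos _
  have hone : ∀ t : ℝ, (0:ℝ) < 1 + t ^ 2 := fun t => by positivity
  -- pointwise bound
  have hbound : ∀ y : Fin n → ℝ,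
      (∏ i, (s + y i ^ 2) ^ (-σ / 2)) *
        (∏ i : Fin n, ∏ j ∈ Finset.Ioi i, |y i - y j| ^ (2 * k))
      ≤ (A ^ n * D) * ∏ i, (1 + y i ^ 2) ^ p := by
    intro y
    have h1 : ∀ i, (s + y i ^ 2) ^ (-σ / 2) ≤ A * (1 + y i ^ 2) ^ (-σ/2) := by
      intro i
      have hl : a * (1 + y i ^ 2) ≤ s + y i ^ 2 := by
        have h1 : a ≤ s := min_le_left _ _
        have h2 : a ≤ 1 := min_le_right _ _
        nlinarith [sq_nonneg (y i)]
      have hr : s + y i ^ 2 ≤ b * (1 + y i ^ 2) := by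
        have h1 : s ≤ b := le_max_left _ _
        have h2 : (1:ℝ) ≤ b := le_max_right _ _
        nlinarith [sq_nonneg (y i)]
      have := aux_rpow_le_max (p := -σ/2) (by positivity : (0:ℝ) < a * (1 + y i ^ 2)) hl hr
      rw [Real.mul_rpow ha.le (hone _).le, Real.mul_rpow (le_max_of_le_left hs.le) (hone _).le]
        at this
      rw [hAdef, max_mul_of_nonneg _ _ (Real.rpow_nonneg (hone _).le _)]
      exact this
    have hb1 : (∏ i, (s + y i ^ 2) ^ (-σ / 2)) ≤ A ^ n * ∏ i, (1 + y i ^ 2) ^ (-σ/2) := by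
      calc (∏ i, (s + y i ^ 2) ^ (-σ / 2))
          ≤ ∏ i, (A * (1 + y i ^ 2) ^ (-σ/2)) :=
            Finset.prod_le_prod (fun i _ => Real.rpow_nonneg (by positivity) _)
              (fun i _ => h1 i)
        _ = A ^ n * ∏ i, (1 + y i ^ 2) ^ (-σ/2) := by
            rw [Finset.prod_mul_distrib, Finset.prod_const, Finset.card_univ, Fintype.card_fin]
    have h2 : ∀ i j : Fin n, |y i - y j| ^ (2 * k)
        ≤ (2:ℝ)^k * ((1 + y i ^ 2) ^ k * (1 + y j ^ 2) ^ k) := by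
      intro i j
      have e1 : |y i - y j| ^ (2 * k) = ((y i - y j) ^ 2) ^ k := by
        rw [Real.rpow_mul (abs_nonneg _), Real.rpow_two, sq_abs]
      have e2 : (y i - y j) ^ 2 ≤ 2 * ((1 + y i ^ 2) * (1 + y j ^ 2)) := by
        nlinarith [sq_nonneg (y i + y j), sq_nonneg (y i * y j)]
      calc |y i - y j| ^ (2 * k) = ((y i - y j) ^ 2) ^ k := e1
        _ ≤ (2 * ((1 + y i ^ 2) * (1 + y j ^ 2))) ^ k :=
            Real.rpow_le_rpow (sq_nonneg _) e2 hk
        _ = (2:ℝ)^k * ((1 + y i ^ 2) ^ k * (1 + y j ^ 2) ^ k) := by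
            rw [Real.mul_rpow (by norm_num) (by positivity),
              Real.mul_rpow (hone _).le (hone _).le]
    have hb2 : (∏ i : Fin n, ∏ j ∈ Finset.Ioi i, |y i - y j| ^ (2 * k))
        ≤ D * ∏ i, (1 + y i ^ 2) ^ μ₀ := by
      have step : (∏ i : Fin n, ∏ j ∈ Finset.Ioi i, |y i - y j| ^ (2 * k))
          ≤ ∏ i : Fin n, ∏ j ∈ Finset.Ioi i,
            ((2:ℝ)^k * ((1 + y i ^ 2) ^ k * (1 + y j ^ 2) ^ k)) := by
        refine Finset.prod_le_prod (fun i _ => Finset.prod_nonneg fun j _ =>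
          Real.rpow_nonneg (abs_nonneg _) _) (fun i _ => ?_)
        exact Finset.prod_le_prod (fun j _ => Real.rpow_nonneg (abs_nonneg _) _)
          (fun j _ => h2 i j)
      refine step.trans (le_of_eq ?_)
      have expand : ∏ i : Fin n, ∏ j ∈ Finset.Ioi i,
            ((2:ℝ)^k * ((1 + y i ^ 2) ^ k * (1 + y j ^ 2) ^ k))
          = D * ∏ i : Fin n, ∏ j ∈ Finset.Ioi i,
            ((1 + y i ^ 2) ^ k * (1 + y j ^ 2) ^ k) := by
        rw [hDdef, ← Finset.prod_mul_distrib]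
        exact Finset.prod_congr rfl fun i _ => by rw [← Finset.prod_mul_distrib]
      rw [expand, aux_prod_pairs (fun i => (1 + y i ^ 2) ^ k)]
      congr 1
      refine Finset.prod_congr rfl fun i _ => ?_
      rw [← Real.rpow_natCast ((1 + y i ^ 2) ^ k) (n-1), ← Real.rpow_mul (hone _).le, hμ₀]
      congr 2
      rw [Nat.cast_sub hn, Nat.cast_one]
    calc (∏ i, (s + y i ^ 2) ^ (-σ / 2)) *
        (∏ i : Fin n, ∏ j ∈ Finset.Ioi i, |y i - y j| ^ (2 * k))
        ≤ (A ^ n * ∏ i, (1 + y i ^ 2) ^ (-σ/2)) * (D * ∏ i, (1 + y i ^ 2) ^ μ₀) := by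
          refine mul_le_mul hb1 hb2 ?_ ?_
          · exact Finset.prod_nonneg fun i _ => Finset.prod_nonneg fun j _ =>
              Real.rpow_nonneg (abs_nonneg _) _
          · positivity
      _ = (A ^ n * D) * ∏ i, (1 + y i ^ 2) ^ p := by
          rw [mul_mul_mul_comm, ← Finset.prod_mul_distrib]
          congr 1
          refine Finset.prod_congr rfl fun i _ => ?_
          rw [← Real.rpow_add (hone _), hpdef]
          ring_nf
  -- conclude
  have hmeas : AEStronglyMeasurable (fun y : Fin n → ℝ =>
      (∏ i, (s + y i ^ 2) ^ (-σ / 2)) *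
        ∏ i : Fin n, ∏ j ∈ Finset.Ioi i, |y i - y j| ^ (2 * k)) volume := by
    apply Measurable.aestronglyMeasurable
    fun_prop
  have hInt : Integrable (fun y : Fin n → ℝ => (A ^ n * D) * ∏ i, (1 + y i ^ 2) ^ p) :=
    (Integrable.fintype_prod (f := fun _ : Fin n => fun t : ℝ => (1 + t ^ 2) ^ p)
      (fun _ => hG)).const_mul _
  refine hInt.mono' hmeas (Filter.Eventually.of_forall fun y => ?_)
  rw [Real.norm_eq_abs, abs_of_nonneg]
  · exact hbound y
  · exact mul_nonneg (Finset.prod_nonneg fun i _ => Real.rpow_nonneg (by positivity) _)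
      (Finset.prod_nonneg fun i _ => Finset.prod_nonneg fun j _ =>
        Real.rpow_nonneg (abs_nonneg _) _)


lemma aux_min_le_rpow {a b c p : ℝ} (ha : 0 < a) (hab : a ≤ b) (hbc : b ≤ c) :
    min (a ^ p) (c ^ p) ≤ b ^ p := by
  rcases le_or_gt 0 p with hp | hp
  · exact (min_le_left _ _).trans (Real.rpow_le_rpow ha.le hab hp)
  · exact (min_le_right _ _).trans (Real.rpow_le_rpow_of_nonpos (ha.trans_le hab) hbc hp.le)

lemma aux_necessary
    (m : ℕ) (k : ℝ) (hk : 0 ≤ k)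
    (μ₀ : ℝ) (hμ₀ : μ₀ = k * m)
    (s : ℝ) (hs : 0 < s) (σ : ℝ)
    (hInt : Integrable (fun y : Fin (m+1) → ℝ =>
      (∏ i, (s + y i ^ 2) ^ (-σ / 2)) *
        ∏ i : Fin (m+1), ∏ j ∈ Finset.Ioi i, |y i - y j| ^ (2 * k))) :
    2 * μ₀ + 1 < σ := by
  rw [volume_pi, ← ((measurePreserving_piFinSuccAbove
      (fun _ : Fin (m+1) => (volume : Measure ℝ)) 0).symm).integrable_comp_emb
      (MeasurableEquiv.measurableEmbedding _)] at hInt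
  simp only [Function.comp_def, MeasurableEquiv.piFinSuccAbove_symm_apply,
    Fin.insertNthEquiv, Fin.insertNth_zero, Equiv.coe_fn_mk, Fin.zero_succAbove, cast_eq,
    Fin.cons_zero, Fin.cons_succ] at hInt
  have h2 := hInt.prod_left_ae
  set T : Set (Fin m → ℝ) := Set.univ.pi fun j : Fin m => Ioo ((j:ℝ)+1) ((j:ℝ)+3/2) with hTdef
  have hT : (Measure.pi fun _ : Fin m => (volume : Measure ℝ)) T ≠ 0 := by
    rw [hTdef, Measure.pi_pi, Finset.prod_ne_zero_iff]
    intro j _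
    rw [Real.volume_Ioo, Ne, ENNReal.ofReal_eq_zero]
    norm_num
  have hex : ∃ c : Fin m → ℝ, (∀ j : Fin m, c j ∈ Ioo ((j:ℝ)+1) ((j:ℝ)+3/2)) ∧
      Integrable (fun t : ℝ =>
        (∏ i, (s + (Fin.cons t c : Fin (m+1) → ℝ) i ^ 2) ^ (-σ / 2)) *
          ∏ i : Fin (m+1), ∏ j ∈ Finset.Ioi i,
            |(Fin.cons t c : Fin (m+1) → ℝ) i - (Fin.cons t c : Fin (m+1) → ℝ) j| ^ (2 * k)) := by
    by_contra hcon
    push_neg at hcon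
    refine hT (measure_mono_null (fun y hyT => ?_) (ae_iff.mp h2))
    exact fun hP => hcon y (fun j => hyT j (mem_univ j)) hP
  obtain ⟨c, hc, hcInt⟩ := hex
  have hcpos : ∀ j : Fin m, 0 < c j := fun j => lt_trans (by positivity) (hc j).1
  set c₀ : ℝ := ∏ j : Fin m, (s + c j ^ 2) ^ (-σ/2) with hc₀def
  set c₁ : ℝ := ∏ i : Fin m, ∏ j ∈ Finset.Ioi i, |c i - c j| ^ (2*k) with hc₁def
  have hc₀ : 0 < c₀ := Finset.prod_pos fun j _ =>
    Real.rpow_pos_of_pos (by positivity) _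
  have hc₁ : 0 < c₁ := by
    refine Finset.prod_pos fun i _ => Finset.prod_pos fun j hj => ?_
    have hij : (i:ℕ) < (j:ℕ) := Fin.lt_def.mp (Finset.mem_Ioi.mp hj)
    have : c i < c j := by
      have h1 := (hc i).2
      have h2 := (hc j).1
      have : (i:ℝ) + 1 ≤ (j:ℝ) := by exact_mod_cast hij
      linarith
    exact Real.rpow_pos_of_pos (abs_pos.mpr (by linarith)) _
  have hslice : ∀ t : ℝ,
      (∏ i, (s + (Fin.cons t c : Fin (m+1) → ℝ) i ^ 2) ^ (-σ / 2)) *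
        ∏ i : Fin (m+1), ∏ j ∈ Finset.Ioi i,
          |(Fin.cons t c : Fin (m+1) → ℝ) i - (Fin.cons t c : Fin (m+1) → ℝ) j| ^ (2 * k)
      = ((s + t^2) ^ (-σ/2) * c₀) * ((∏ j : Fin m, |t - c j| ^ (2*k)) * c₁) := by
    intro t
    rw [Fin.prod_univ_succ, Fin.prod_univ_succ, Fin.prod_Ioi_zero]
    simp only [Fin.cons_zero, Fin.cons_succ, Fin.prod_Ioi_succ]
    rfl
  -- lower bound on (2(m+1), ∞)
  set R : ℝ := 2*(m+1) with hRdef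
  have hR : 0 < R := by positivity
  set E : ℝ := min 1 ((s+1) ^ (-σ/2)) with hEdef
  have hE : 0 < E := lt_min one_pos (Real.rpow_pos_of_pos (by linarith) _)
  set c₃ : ℝ := (c₀ * c₁ * E) * (2:ℝ) ^ (-(2*μ₀)) with hc₃def
  have hc₃ : 0 < c₃ := by
    have := Real.rpow_pos_of_pos (two_pos (α := ℝ)) (-(2*μ₀))
    positivity
  have hlow : ∀ t ∈ Ioi R, c₃ * t ^ (2*μ₀ - σ) ≤
      ((s + t^2) ^ (-σ/2) * c₀) * ((∏ j : Fin m, |t - c j| ^ (2*k)) * c₁) := by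
    intro t ht
    rw [mem_Ioi] at ht
    have ht0 : (0:ℝ) < t := lt_trans hR ht
    have ht1 : (1:ℝ) ≤ t := by
      have : (2:ℝ) ≤ R := by rw [hRdef]; push_cast; linarith [Nat.cast_nonneg (α := ℝ) m]
      linarith
    have ht2 : (t^2 : ℝ) ^ (-σ/2) = t ^ (-σ) := by
      rw [← Real.rpow_natCast t 2, ← Real.rpow_mul ht0.le]
      congr 1
      push_cast
      ring
    have hA : E * t ^ (-σ) ≤ (s + t^2) ^ (-σ/2) := by
      have h1 : t^2 ≤ s + t^2 := by linarith
      have ht1' : (1:ℝ) ≤ t^2 := by nlinarith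
      have h2 : s + t^2 ≤ (s+1) * t^2 := by nlinarith
      have hmin := aux_min_le_rpow (p := -σ/2) (show (0:ℝ) < t^2 by positivity) h1 h2
      rw [Real.mul_rpow (by linarith : (0:ℝ) ≤ s+1) (sq_nonneg t), ht2] at hmin
      rw [hEdef, min_mul_of_nonneg _ _ (Real.rpow_nonneg ht0.le _), one_mul]
      exact hmin
    have hB : (2:ℝ) ^ (-(2*μ₀)) * t ^ (2*μ₀) ≤ ∏ j : Fin m, |t - c j| ^ (2*k) := by
      have hjb : ∀ j : Fin m, (t/2) ^ (2*k) ≤ |t - c j| ^ (2*k) := by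
        intro j
        have hjm : (j:ℝ) + 3/2 ≤ (m:ℝ) + 1 := by
          have : (j:ℕ) < m := j.isLt
          have : (j:ℝ) + 1 ≤ (m:ℝ) := by exact_mod_cast this
          linarith
        have hcj : c j ≤ t/2 := by
          have := (hc j).2
          rw [hRdef] at ht
          push_cast at ht
          linarith
        have : t/2 ≤ |t - c j| := by
          rw [abs_of_nonneg (by linarith)]
          linarith
        exact Real.rpow_le_rpow (by positivity) this (by linarith)
      calc (2:ℝ) ^ (-(2*μ₀)) * t ^ (2*μ₀) = (t/2) ^ (2*μ₀) := by
            rw [Real.div_rpow ht0.le (by norm_num), Real.rpow_neg (by norm_num)]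
            ring
        _ = ((t/2) ^ (2*k)) ^ (m:ℕ) := by
            rw [← Real.rpow_natCast ((t/2) ^ (2*k)) m, ← Real.rpow_mul (by positivity)]
            rw [hμ₀]; ring_nf
        _ = ∏ _j : Fin m, (t/2) ^ (2*k) := by
            rw [Finset.prod_const, Finset.card_univ, Fintype.card_fin]
        _ ≤ ∏ j : Fin m, |t - c j| ^ (2*k) :=
            Finset.prod_le_prod (fun j _ => by positivity) (fun j _ => hjb j)
    calc c₃ * t ^ (2*μ₀ - σ)
        = (E * t ^ (-σ) * c₀) * (((2:ℝ) ^ (-(2*μ₀)) * t ^ (2*μ₀)) * c₁) := by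
          rw [hc₃def, show 2*μ₀ - σ = -σ + 2*μ₀ by ring, Real.rpow_add ht0]
          ring
      _ ≤ ((s + t^2) ^ (-σ/2) * c₀) * ((∏ j : Fin m, |t - c j| ^ (2*k)) * c₁) := by
          refine mul_le_mul (mul_le_mul_of_nonneg_right hA hc₀.le)
            (mul_le_mul_of_nonneg_right hB hc₁.le) ?_ ?_
          · positivity
          · positivity
  -- deduce integrability of t ^ (2μ₀ - σ) on (R, ∞)
  have key : IntegrableOn (fun t : ℝ => t ^ (2*μ₀ - σ)) (Ioi R) := by
    refine Integrable.mono' ((hcInt.integrableOn (s := Ioi R)).const_mul c₃⁻¹)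
      ((by fun_prop : Measurable fun t : ℝ => t ^ (2*μ₀ - σ)).aestronglyMeasurable) ?_
    rw [ae_restrict_iff' measurableSet_Ioi]
    refine Filter.Eventually.of_forall fun t ht => ?_
    have ht0 : (0:ℝ) < t := lt_trans hR (mem_Ioi.mp ht)
    rw [Real.norm_eq_abs, abs_of_nonneg (Real.rpow_nonneg ht0.le _), hslice t]
    have h := hlow t ht
    calc t ^ (2*μ₀ - σ) = c₃⁻¹ * (c₃ * t ^ (2*μ₀ - σ)) := by
          field_simp
      _ ≤ c₃⁻¹ * (((s + t^2) ^ (-σ/2) * c₀) * ((∏ j : Fin m, |t - c j| ^ (2*k)) * c₁)) :=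
          mul_le_mul_of_nonneg_left h (by positivity)
  rw [integrableOn_Ioi_rpow_iff hR] at key
  linarith


/-- for `s > 0`, the function
`y ↦ ∏ᵢ (s + yᵢ²)^{-σ/2} ∏_{i<j} |yᵢ - yⱼ|^{2k}` is Lebesgue integrable over `ℝⁿ`
if and only if `σ > 2k(n-1) + 1 = 2μ₀ + 1`. -/
theorem integrable_iff_exponent_gt
    (n : ℕ) (hn : 1 ≤ n) (k : ℝ) (hk : 0 ≤ k)
    (μ₀ : ℝ) (hμ₀ : μ₀ = k * (n - 1))
    (s : ℝ) (hs : 0 < s) (σ : ℝ) :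
    Integrable (fun y : Fin n → ℝ =>
      (∏ i, (s + y i ^ 2) ^ (-σ / 2)) *
        ∏ i : Fin n, ∏ j ∈ Finset.Ioi i, |y i - y j| ^ (2 * k)) ↔
    2 * μ₀ + 1 < σ := by
  constructor
  · intro hInt
    obtain ⟨m, rfl⟩ : ∃ m, n = m + 1 := ⟨n - 1, by omega⟩
    exact aux_necessary m k hk μ₀ (by rw [hμ₀]; push_cast; ring) s hs σ hInt
  · intro hσ
    exact aux_integrable_dir n hn k hk μ₀ hμ₀ s hs σ hσ
end
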